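/- (Haar twirl formula, stated and used in Appendix D.) Let d ≥ 2 and let μ be the Haar probability measure on the unitary group U(d) of d × d complex matrices. Let F be the swap matrix on ℂ^d ⊗ ℂ^d, i.e. the d² × d² matrix indexed by pairs with F_{(i,j),(k,l)} = 1 if i = l and j = k, and 0 otherwise. Then for every d² × d² complex matrix M: ∫ (U ⊗ U) * M * (U ⊗ U)† dμ(U) = (tr M/(d²−1) − tr(M*F)/(d(d²−1))) • 1 + (tr(M*F)/(d²−1) − tr M/(d(d²−1))) • F, where U ⊗ U is the Kronecker product, 1 is the d² × d² identity, and U† is the conjugate transpose. -/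

import Mathlib

open Matrix MeasureTheory
open scoped Kronecker

noncomputable section

noncomputable instance matrixMeasurableSpace {m k : Type*} :
    MeasurableSpace (Matrix m k ℂ) := borel _

instance matrixBorelSpace {m k : Type*} : BorelSpace (Matrix m k ℂ) := ⟨rfl⟩

/-- The swap matrix `F` on `ℂ^d ⊗ ℂ^d`: `F_{(i,j),(k,l)} = 1` iff `i = l` and `j = k`. -/
def swapMatrix (d : ℕ) : Matrix (Fin d × Fin d) (Fin d × Fin d) ℂ :=
  fun p q => if p.1 = q.2 ∧ p.2 = q.1 then 1 else 0

namespace HaarTwirlAux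

variable {d : ℕ}

instance : BorelSpace (Matrix.unitaryGroup (Fin d) ℂ) :=
  Subtype.borelSpace _

instance : MeasurableMul (Matrix.unitaryGroup (Fin d) ℂ) := by
  constructor
  · intro g
    apply Measurable.subtype_mk
    have h : Measurable fun A : Matrix (Fin d) (Fin d) ℂ => (g : Matrix (Fin d) (Fin d) ℂ) * A :=
      (continuous_const.matrix_mul continuous_id).measurable
    exact h.comp measurable_subtype_coe
  · intro g
    apply Measurable.subtype_mk
    have h : Measurable fun A : Matrix (Fin d) (Fin d) ℂ => A * (g : Matrix (Fin d) (Fin d) ℂ) :=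
      (continuous_id.matrix_mul continuous_const).measurable
    exact h.comp measurable_subtype_coe

lemma kron_conjTranspose (A B : Matrix (Fin d) (Fin d) ℂ) : (A ⊗ₖ B)ᴴ = Aᴴ ⊗ₖ Bᴴ := by
  ext ⟨i, j⟩ ⟨k, l⟩
  simp [conjTranspose_apply, kronecker_apply]

lemma swap_mul_kron (A B : Matrix (Fin d) (Fin d) ℂ) :
    swapMatrix d * (A ⊗ₖ B) = (B ⊗ₖ A) * swapMatrix d := by
  ext ⟨i, j⟩ ⟨k, l⟩
  rw [mul_apply, mul_apply]
  rw [Fintype.sum_prod_type, Fintype.sum_prod_type]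
  simp [swapMatrix, kronecker_apply, Finset.sum_ite_eq, Finset.sum_ite_eq', ite_and, mul_comm]

lemma swap_mul_swap : swapMatrix d * swapMatrix d = 1 := by
  ext ⟨i, j⟩ ⟨k, l⟩
  rw [mul_apply, Fintype.sum_prod_type]
  simp [swapMatrix, Finset.sum_ite_eq, Finset.sum_ite_eq', ite_and, one_apply, Prod.ext_iff,
    and_comm, eq_comm]

lemma trace_swap : (swapMatrix d).trace = (d : ℂ) := by
  rw [trace, Fintype.sum_prod_type]
  simp [Matrix.diag, swapMatrix, Finset.sum_ite_eq, Finset.sum_ite_eq', eq_comm]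

lemma trace_one' : (1 : Matrix (Fin d × Fin d) (Fin d × Fin d) ℂ).trace = (d : ℂ) ^ 2 := by
  simp [trace_one]
  ring

lemma triple_apply {n : Type*} [Fintype n] (A N B : Matrix n n ℂ) (p q : n) :
    (A * N * B) p q = ∑ r, ∑ s, A p r * N r s * B s q := by
  rw [mul_apply]
  simp_rw [mul_apply, Finset.sum_mul]
  rw [Finset.sum_comm]

lemma sum_split_two {i0 i1 : Fin d} (h01 : i0 ≠ i1) (g : Fin d → ℂ) :
    ∑ t, g t = g i0 + g i1 +
      ∑ t ∈ Finset.univ.filter (fun t => ¬(t = i0 ∨ t = i1)), g t := by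
  rw [← Finset.sum_filter_add_sum_filter_not Finset.univ (fun t => t = i0 ∨ t = i1)]
  congr 1
  rw [Finset.filter_or, Finset.filter_eq', Finset.filter_eq']
  simp [Finset.mem_univ]
  rw [Finset.sum_pair h01]

def rot (d : ℕ) (i0 i1 : Fin d) : Matrix (Fin d) (Fin d) ℂ :=
  Matrix.of fun t s =>
    if t = i0 then (if s = i0 then (3/5:ℂ) else if s = i1 then 4/5 else 0)
    else if t = i1 then (if s = i0 then -(4/5:ℂ) else if s = i1 then 3/5 else 0)
    else if t = s then 1 else 0

lemma rot_mem {i0 i1 : Fin d} (h01 : i0 ≠ i1) : rot d i0 i1 ∈ Matrix.unitaryGroup (Fin d) ℂ := by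
  rw [Matrix.mem_unitaryGroup_iff', Matrix.star_eq_conjTranspose]
  ext r s
  rw [mul_apply]
  simp only [conjTranspose_apply, rot, of_apply]
  rw [sum_split_two h01]
  have tailval : ∀ t ∈ Finset.univ.filter (fun t : Fin d => ¬(t = i0 ∨ t = i1)),
      (star (if t = i0 then (if r = i0 then (3/5:ℂ) else if r = i1 then 4/5 else 0)
        else if t = i1 then (if r = i0 then -(4/5:ℂ) else if r = i1 then 3/5 else 0)
        else if t = r then 1 else 0) *
       (if t = i0 then (if s = i0 then (3/5:ℂ) else if s = i1 then 4/5 else 0)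
        else if t = i1 then (if s = i0 then -(4/5:ℂ) else if s = i1 then 3/5 else 0)
        else if t = s then 1 else 0))
      = if t = r then (if t = s then (1:ℂ) else 0) else 0 := by
    intro t ht
    simp only [Finset.mem_filter, Finset.mem_univ, true_and] at ht
    push_neg at ht
    obtain ⟨ht0, ht1⟩ := ht
    rw [if_neg ht0, if_neg ht1, if_neg ht0, if_neg ht1]
    by_cases htr : t = r <;> by_cases hts : t = s <;> simp [htr, hts]
  rw [Finset.sum_congr rfl tailval, Finset.sum_ite_eq' (Finset.univ.filter _) r]
  by_cases hr0 : r = i0 <;> by_cases hr1 : r = i1 <;>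
    by_cases hs0 : s = i0 <;> by_cases hs1 : s = i1 <;>
    simp_all [Matrix.one_apply, h01, Ne.symm h01, eq_comm] <;>
    norm_num [map_ofNat]

lemma I_pow_inj {a b : ℕ} (ha : a ≤ 2) (hb : b ≤ 2) (h : Complex.I ^ a = Complex.I ^ b) :
    a = b := by
  interval_cases a <;> interval_cases b <;>
    simp_all [pow_succ, Complex.ext_iff] <;> norm_num at h

lemma delta_aux {i j k l : Fin d}
    (h : ∀ m : Fin d, ((if k = m then 1 else 0) + (if l = m then 1 else 0) : ℕ)
      = (if i = m then 1 else 0) + (if j = m then 1 else 0)) :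
    (k = i ∧ l = j) ∨ (k = j ∧ l = i) := by
  by_cases hki : k = i
  · left
    refine ⟨hki, ?_⟩
    subst hki
    by_cases hlj : l = j
    · exact hlj
    · have h2 := h j
      split_ifs at h2 <;> simp_all
  · have hli : l = i := by
      by_cases hli : l = i
      · exact hli
      · have h1 := h i
        split_ifs at h1 <;> simp_all
    right
    subst hli
    refine ⟨?_, rfl⟩
    by_cases hkj : k = j
    · exact hkj
    · have h2 := h j
      split_ifs at h2 <;> simp_all

lemma diagPhase_mem (m : Fin d) :
    Matrix.diagonal (fun t => if t = m then Complex.I else 1) ∈ Matrix.unitaryGroup (Fin d) ℂ := by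
  rw [Matrix.mem_unitaryGroup_iff']
  rw [Matrix.star_eq_conjTranspose, Matrix.diagonal_conjTranspose, Matrix.diagonal_mul_diagonal]
  ext a b
  by_cases hab : a = b
  · subst hab
    rw [Matrix.diagonal_apply_eq, Matrix.one_apply_eq]
    by_cases h : a = m <;> simp [h, Pi.star_apply, Complex.conj_I]
  · rw [Matrix.diagonal_apply_ne _ hab, Matrix.one_apply_ne hab]

lemma permMat_mem (σ : Equiv.Perm (Fin d)) :
    Matrix.of (fun r s => if σ s = r then (1:ℂ) else 0) ∈ Matrix.unitaryGroup (Fin d) ℂ := by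
  rw [Matrix.mem_unitaryGroup_iff']
  ext r s
  rw [Matrix.star_eq_conjTranspose, mul_apply]
  simp only [conjTranspose_apply, of_apply, apply_ite (star : ℂ → ℂ), star_one, star_zero]
  simp [Finset.sum_ite_eq, one_apply, Equiv.apply_eq_iff_eq, eq_comm]

lemma sum_two_mul {i0 i1 : Fin d} (h01 : i0 ≠ i1) (x y : ℂ) (g : Fin d → ℂ) :
    ∑ t, (if t = i0 then x else if t = i1 then y else 0) * g t = x * g i0 + y * g i1 := by
  rw [sum_split_two h01]
  rw [Finset.sum_eq_zero (fun t ht => by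
    simp only [Finset.mem_filter, Finset.mem_univ, true_and] at ht
    push_neg at ht
    rw [if_neg ht.1, if_neg ht.2, zero_mul])]
  simp [Ne.symm h01]

lemma commutant (hd : 2 ≤ d) (X : Matrix (Fin d × Fin d) (Fin d × Fin d) ℂ)
    (hX : ∀ V : Matrix.unitaryGroup (Fin d) ℂ,
      X * ((V : Matrix (Fin d) (Fin d) ℂ) ⊗ₖ (V : Matrix (Fin d) (Fin d) ℂ))
        = ((V : Matrix (Fin d) (Fin d) ℂ) ⊗ₖ (V : Matrix (Fin d) (Fin d) ℂ)) * X) :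
    ∃ a b : ℂ, X = a • 1 + b • swapMatrix d := by
  classical
  set i0 : Fin d := ⟨0, by omega⟩ with hi0
  set i1 : Fin d := ⟨1, by omega⟩ with hi1
  have h01 : i0 ≠ i1 := by simp [hi0, hi1, Fin.ext_iff]
  -- vanishing of off-multiset entries
  have vanish : ∀ i j k l : Fin d, ¬(k = i ∧ l = j) → ¬(k = j ∧ l = i) → X (i,j) (k,l) = 0 := by
    intro i j k l h1 h2
    by_contra hx
    have key : ∀ m : Fin d, ((if k = m then 1 else 0) + (if l = m then 1 else 0) : ℕ)
        = (if i = m then 1 else 0) + (if j = m then 1 else 0) := by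
      intro m
      have hD := congrFun (congrFun (hX ⟨_, diagPhase_mem m⟩) (i,j)) (k,l)
      have hcoe : ((⟨_, diagPhase_mem m⟩ : Matrix.unitaryGroup (Fin d) ℂ) : Matrix (Fin d) (Fin d) ℂ)
          = Matrix.diagonal (fun t => if t = m then Complex.I else 1) := rfl
      rw [hcoe, Matrix.diagonal_kronecker_diagonal] at hD
      rw [show (X * Matrix.diagonal fun i_1 : Fin d × Fin d =>
            (if i_1.1 = m then Complex.I else 1) * if i_1.2 = m then Complex.I else 1) (i,j) (k,l)
          = X (i,j) (k,l) * ((if k = m then Complex.I else 1) * if l = m then Complex.I else 1)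
        from Matrix.mul_diagonal _ _ _ _] at hD
      rw [show (Matrix.diagonal (fun i_1 : Fin d × Fin d =>
            (if i_1.1 = m then Complex.I else 1) * if i_1.2 = m then Complex.I else 1) * X) (i,j) (k,l)
          = ((if i = m then Complex.I else 1) * if j = m then Complex.I else 1) * X (i,j) (k,l)
        from Matrix.diagonal_mul _ _ _ _] at hD
      have heq : (if k = m then Complex.I else 1) * (if l = m then Complex.I else 1)
          = (if i = m then Complex.I else 1) * (if j = m then Complex.I else 1) :=
        mul_left_cancel₀ hx (by rw [hD, mul_comm])
      apply I_pow_inj (by split_ifs <;> omega) (by split_ifs <;> omega)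
      rw [pow_add, pow_add]
      simpa [apply_ite (Complex.I ^ ·)] using heq
    rcases delta_aux key with h | h
    exacts [h1 h, h2 h]
  -- permutation invariance
  have perm : ∀ (σ : Equiv.Perm (Fin d)) (i j k l : Fin d),
      X (σ i, σ j) (σ k, σ l) = X (i, j) (k, l) := by
    intro σ i j k l
    have h := congrFun (congrFun (hX ⟨_, permMat_mem σ⟩) (σ i, σ j)) (k, l)
    have hcoe : ((⟨_, permMat_mem σ⟩ : Matrix.unitaryGroup (Fin d) ℂ) : Matrix (Fin d) (Fin d) ℂ)
        = Matrix.of (fun r s => if σ s = r then (1:ℂ) else 0) := rfl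
    rw [hcoe] at h
    rw [mul_apply, mul_apply, Fintype.sum_prod_type, Fintype.sum_prod_type] at h
    simp only [kroneckerMap_apply, of_apply, mul_ite, ite_mul, one_mul, mul_one, zero_mul,
      mul_zero, Finset.sum_ite_eq, Finset.sum_ite_eq', Finset.mem_univ, if_true,
      Equiv.apply_eq_iff_eq] at h
    exact h
  -- permutations moving (i0,i1) to arbitrary distinct pairs
  have exists_perm : ∀ {i j : Fin d}, i ≠ j → ∃ σ : Equiv.Perm (Fin d), σ i0 = i ∧ σ i1 = j := by
    intro i j hij
    refine ⟨(Equiv.swap i0 i).trans (Equiv.swap ((Equiv.swap i0 i) i1) j), ?_, ?_⟩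
    · rw [Equiv.trans_apply, Equiv.swap_apply_left]
      refine Equiv.swap_apply_of_ne_of_ne ?_ hij
      intro hc
      exact h01 (Equiv.injective (Equiv.swap i0 i) (by rw [← hc, Equiv.swap_apply_left]))
    · rw [Equiv.trans_apply, Equiv.swap_apply_left]
  have offdiag : ∀ {i j : Fin d}, i ≠ j → X (i,j) (i,j) = X (i0,i1) (i0,i1) := by
    intro i j hij
    obtain ⟨σ, h1, h2⟩ := exists_perm hij
    rw [← h1, ← h2, perm]
  have offswap : ∀ {i j : Fin d}, i ≠ j → X (i,j) (j,i) = X (i0,i1) (i1,i0) := by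
    intro i j hij
    obtain ⟨σ, h1, h2⟩ := exists_perm hij
    rw [← h1, ← h2, perm]
  have diag : ∀ i : Fin d, X (i,i) (i,i) = X (i0,i0) (i0,i0) := by
    intro i
    have := perm (Equiv.swap i0 i) i0 i0 i0 i0
    rwa [Equiv.swap_apply_left] at this
  -- the rotation relation: c = a + b
  have hc : X (i0,i0) (i0,i0) = X (i0,i1) (i0,i1) + X (i0,i1) (i1,i0) := by
    have h := congrFun (congrFun (hX ⟨_, rot_mem h01⟩) (i0,i0)) (i0,i1)
    have hcoe : ((⟨_, rot_mem h01⟩ : Matrix.unitaryGroup (Fin d) ℂ) : Matrix (Fin d) (Fin d) ℂ)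
        = rot d i0 i1 := rfl
    rw [hcoe] at h
    have hL : (X * (rot d i0 i1 ⊗ₖ rot d i0 i1)) (i0,i0) (i0,i1)
        = X (i0,i0) (i0,i0) * (12/25) := by
      rw [mul_apply]
      rw [Finset.sum_eq_single ((i0,i0) : Fin d × Fin d)]
      · have hval : (rot d i0 i1 ⊗ₖ rot d i0 i1) (i0,i0) (i0,i1) = 12/25 := by
          simp only [kroneckerMap_apply, rot, of_apply, if_pos rfl, if_neg (Ne.symm h01)]
          norm_num
        rw [hval]
      · intro r _ hne
        have : X (i0,i0) r = 0 := by
          rw [show r = (r.1, r.2) from rfl]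
          refine vanish i0 i0 r.1 r.2 ?_ ?_ <;>
          · intro hc2
            exact hne (by rw [show r = (r.1, r.2) from rfl, hc2.1, hc2.2])
        rw [this, zero_mul]
      · intro hmem
        exact absurd (Finset.mem_univ _) hmem
    have hR : ((rot d i0 i1 ⊗ₖ rot d i0 i1) * X) (i0,i0) (i0,i1)
        = (12/25) * (X (i0,i1) (i0,i1) + X (i1,i0) (i0,i1)) := by
      rw [mul_apply, Fintype.sum_prod_type]
      have inner : ∀ r1 : Fin d,
          (∑ r2, (rot d i0 i1 ⊗ₖ rot d i0 i1) (i0,i0) (r1,r2) * X (r1,r2) (i0,i1))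
          = (if r1 = i0 then (3/5:ℂ) else if r1 = i1 then 4/5 else 0) *
              ∑ r2, (if r2 = i0 then (3/5:ℂ) else if r2 = i1 then 4/5 else 0) * X (r1,r2) (i0,i1) := by
        intro r1
        rw [Finset.mul_sum]
        refine Finset.sum_congr rfl (fun r2 _ => ?_)
        simp only [kroneckerMap_apply, rot, of_apply, eq_self_iff_true, if_true]
        ring
      rw [Finset.sum_congr rfl (fun r1 _ => inner r1)]
      rw [sum_two_mul h01, sum_two_mul h01, sum_two_mul h01]
      have z1 : X (i0,i0) (i0,i1) = 0 := by
        refine vanish i0 i0 i0 i1 ?_ ?_ <;> exact fun hc2 => h01 hc2.2.symm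
      have z2 : X (i1,i1) (i0,i1) = 0 := by
        refine vanish i1 i1 i0 i1 ?_ ?_ <;> exact fun hc2 => h01 hc2.1
      rw [z1, z2]
      ring
    rw [hL, hR] at h
    have hswapentry : X (i1,i0) (i0,i1) = X (i0,i1) (i1,i0) := by
      have := perm (Equiv.swap i0 i1) i0 i1 i1 i0
      rwa [Equiv.swap_apply_left, Equiv.swap_apply_right] at this
    rw [hswapentry] at h
    field_simp at h
    linear_combination h
  refine ⟨X (i0,i1) (i0,i1), X (i0,i1) (i1,i0), ?_⟩
  ext ⟨i,j⟩ ⟨k,l⟩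
  simp only [Matrix.add_apply, Matrix.smul_apply, smul_eq_mul, Matrix.one_apply, swapMatrix]
  by_cases h1 : k = i ∧ l = j <;> by_cases h2 : k = j ∧ l = i
  · rw [h1.1, h1.2]
    have hij : j = i := h1.2.symm.trans h2.2
    rw [hij]
    rw [if_pos rfl, if_pos ⟨rfl, rfl⟩]
    rw [diag i, hc, mul_one, mul_one]
  · rw [h1.1, h1.2]
    have hij : i ≠ j := fun hc2 => h2 ⟨h1.1.trans hc2, h1.2.trans hc2.symm⟩
    rw [offdiag hij]
    rw [if_pos rfl, if_neg (fun hc2 : i = j ∧ j = i => hij hc2.1)]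
    ring
  · rw [h2.1, h2.2]
    have hij : i ≠ j := fun hc2 => h1 ⟨h2.1.trans hc2.symm, h2.2.trans hc2⟩
    rw [offswap hij]
    rw [if_neg (fun hc2 : (i,j) = (j,i) => hij (congrArg Prod.fst hc2)), if_pos ⟨rfl, rfl⟩]
    ring
  · rw [vanish i j k l h1 h2]
    have c1 : ¬((i,j) = (k,l)) := fun hc2 =>
      h1 ⟨(congrArg Prod.fst hc2).symm, (congrArg Prod.snd hc2).symm⟩
    have c2 : ¬(i = l ∧ j = k) := fun hc2 => h2 ⟨hc2.2.symm, hc2.1.symm⟩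
    rw [if_neg c1, if_neg c2]
    ring

end HaarTwirlAux

open HaarTwirlAux

/-- The Haar twirl formula (Appendix D): averaging `(U ⊗ U) M (U ⊗ U)†` over the Haar
probability measure on the unitary group yields a combination of the identity and the
swap matrix, entrywise. -/
theorem haar_twirl {d : ℕ} (hd : 2 ≤ d)
    (μ : Measure (Matrix.unitaryGroup (Fin d) ℂ))
    [IsProbabilityMeasure μ] [μ.IsMulLeftInvariant]
    (M : Matrix (Fin d × Fin d) (Fin d × Fin d) ℂ) (p q : Fin d × Fin d) :
    ∫ U : Matrix.unitaryGroup (Fin d) ℂ,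
        (((U : Matrix (Fin d) (Fin d) ℂ) ⊗ₖ (U : Matrix (Fin d) (Fin d) ℂ)) * M *
          ((U : Matrix (Fin d) (Fin d) ℂ) ⊗ₖ (U : Matrix (Fin d) (Fin d) ℂ))ᴴ) p q ∂μ
      = ((M.trace / ((d : ℂ) ^ 2 - 1)
            - (M * swapMatrix d).trace / ((d : ℂ) * ((d : ℂ) ^ 2 - 1))) •
              (1 : Matrix (Fin d × Fin d) (Fin d × Fin d) ℂ)
          + ((M * swapMatrix d).trace / ((d : ℂ) ^ 2 - 1)
            - M.trace / ((d : ℂ) * ((d : ℂ) ^ 2 - 1))) • swapMatrix d) p q := by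
  classical
  set UU : Matrix.unitaryGroup (Fin d) ℂ → Matrix (Fin d × Fin d) (Fin d × Fin d) ℂ :=
    fun U => (U : Matrix (Fin d) (Fin d) ℂ) ⊗ₖ (U : Matrix (Fin d) (Fin d) ℂ) with hUU
  set f : Matrix.unitaryGroup (Fin d) ℂ → Matrix (Fin d × Fin d) (Fin d × Fin d) ℂ :=
    fun U => UU U * M * (UU U)ᴴ with hf
  have hUUdef : ∀ U, UU U
      = ((U : Matrix (Fin d) (Fin d) ℂ) ⊗ₖ (U : Matrix (Fin d) (Fin d) ℂ)) := fun _ => rfl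
  have hfdef : ∀ U, f U = UU U * M * (UU U)ᴴ := fun _ => rfl
  -- unitarity of UU
  have hUUunit : ∀ U, (UU U)ᴴ * UU U = 1 := by
    intro U
    rw [hUUdef U, kron_conjTranspose, ← mul_kronecker_mul]
    rw [← Matrix.star_eq_conjTranspose, Matrix.UnitaryGroup.star_mul_self, one_kronecker_one]
  -- continuity of entries
  have hcont : ∀ p q : Fin d × Fin d, Continuous fun U => f U p q := by
    intro p q
    have hbase : ∀ (i j : Fin d), Continuous fun U : Matrix.unitaryGroup (Fin d) ℂ =>
        (U : Matrix (Fin d) (Fin d) ℂ) i j := by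
      intro i j
      exact (continuous_subtype_val.matrix_elem i j)
    have : (fun U => f U p q)
        = fun (U : Matrix.unitaryGroup (Fin d) ℂ) => ∑ r : Fin d × Fin d, ∑ s : Fin d × Fin d,
            ((U : Matrix (Fin d) (Fin d) ℂ) p.1 r.1 * (U : Matrix (Fin d) (Fin d) ℂ) p.2 r.2)
              * M r s
              * star ((U : Matrix (Fin d) (Fin d) ℂ) q.1 s.1
                  * (U : Matrix (Fin d) (Fin d) ℂ) q.2 s.2) := by
      funext U
      rw [hfdef U, triple_apply]
      refine Finset.sum_congr rfl fun r _ => Finset.sum_congr rfl fun s _ => ?_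
      rw [hUUdef U]
      simp [kroneckerMap_apply, conjTranspose_apply]
    rw [this]
    refine continuous_finset_sum _ fun r _ => continuous_finset_sum _ fun s _ => ?_
    exact (((hbase p.1 r.1).mul (hbase p.2 r.2)).mul continuous_const).mul
      (((hbase q.1 s.1).mul (hbase q.2 s.2)).star)
  -- boundedness of entries
  have hnorm1 : ∀ (U : Matrix.unitaryGroup (Fin d) ℂ) (i j : Fin d),
      ‖(U : Matrix (Fin d) (Fin d) ℂ) i j‖ ≤ 1 := fun U i j =>
    entry_norm_bound_of_unitary U.2 i j
  have hbdd : ∀ (U : Matrix.unitaryGroup (Fin d) ℂ) (p q : Fin d × Fin d),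
      ‖f U p q‖ ≤ ∑ r : Fin d × Fin d, ∑ s : Fin d × Fin d, ‖M r s‖ := by
    intro U p q
    rw [hfdef U, triple_apply]
    refine (norm_sum_le _ _).trans (Finset.sum_le_sum fun r _ => ?_)
    refine (norm_sum_le _ _).trans (Finset.sum_le_sum fun s _ => ?_)
    rw [norm_mul, norm_mul]
    have h1 : ‖UU U p r‖ ≤ 1 := by
      rw [hUUdef U]
      simp only [kroneckerMap_apply, norm_mul]
      exact mul_le_one₀ (hnorm1 U p.1 r.1) (norm_nonneg _) (hnorm1 U p.2 r.2)
    have h2 : ‖(UU U)ᴴ s q‖ ≤ 1 := by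
      rw [hUUdef U, kron_conjTranspose]
      simp only [kroneckerMap_apply, norm_mul, conjTranspose_apply, norm_star]
      exact mul_le_one₀ (hnorm1 U q.1 s.1) (norm_nonneg _) (hnorm1 U q.2 s.2)
    calc ‖UU U p r‖ * ‖M r s‖ * ‖(UU U)ᴴ s q‖
        ≤ 1 * ‖M r s‖ * 1 := by
          refine mul_le_mul (mul_le_mul h1 le_rfl (norm_nonneg _) zero_le_one) h2
            (norm_nonneg _) (by positivity)
      _ = ‖M r s‖ := by ring
  -- integrability
  have hint : ∀ p q : Fin d × Fin d, Integrable (fun U => f U p q) μ := by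
    intro p q
    refine Integrable.mono' (integrable_const (∑ r : Fin d × Fin d, ∑ s : Fin d × Fin d, ‖M r s‖))
      (hcont p q).aestronglyMeasurable ?_
    exact Filter.Eventually.of_forall fun U => hbdd U p q
  -- the averaged matrix
  set Y : Matrix (Fin d × Fin d) (Fin d × Fin d) ℂ :=
    Matrix.of (fun p q => ∫ U, f U p q ∂μ) with hY
  -- pulling constant matrices through the integral
  have pull : ∀ (A B : Matrix (Fin d × Fin d) (Fin d × Fin d) ℂ) (p q : Fin d × Fin d),
      ∫ U, (A * f U * B) p q ∂μ = (A * Y * B) p q := by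
    intro A B p q
    have e1 : ∀ U, (A * f U * B) p q = ∑ r : Fin d × Fin d, ∑ s : Fin d × Fin d,
        A p r * f U r s * B s q := fun U => triple_apply _ _ _ _ _
    calc ∫ U, (A * f U * B) p q ∂μ
        = ∫ U, ∑ r : Fin d × Fin d, ∑ s : Fin d × Fin d, A p r * f U r s * B s q ∂μ := by
          simp_rw [e1]
      _ = ∑ r : Fin d × Fin d, ∑ s : Fin d × Fin d, A p r * (∫ U, f U r s ∂μ) * B s q := by
          rw [integral_finset_sum _ (fun r _ => integrable_finset_sum _
            (fun s _ => ((hint r s).const_mul _).mul_const _))]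
          refine Finset.sum_congr rfl fun r _ => ?_
          rw [integral_finset_sum _ (fun s _ => ((hint r s).const_mul _).mul_const _)]
          refine Finset.sum_congr rfl fun s _ => ?_
          rw [integral_mul_const, integral_const_mul]
      _ = (A * Y * B) p q := (triple_apply _ _ _ _ _).symm
  -- invariance: Y commutes with every V ⊗ V
  have hcomm : ∀ V : Matrix.unitaryGroup (Fin d) ℂ, Y * UU V = UU V * Y := by
    intro V
    have hYV : Y = UU V * Y * (UU V)ᴴ := by
      ext p q
      have h1 : Y p q = ∫ U, f (V * U) p q ∂μ :=
        (integral_mul_left_eq_self (fun U => f U p q) V).symm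
      have h2 : ∀ U, f (V * U) = UU V * f U * (UU V)ᴴ := by
        intro U
        have hco : ((V * U : Matrix.unitaryGroup (Fin d) ℂ) : Matrix (Fin d) (Fin d) ℂ)
            = (V : Matrix (Fin d) (Fin d) ℂ) * (U : Matrix (Fin d) (Fin d) ℂ) := rfl
        rw [hfdef (V * U), hfdef U, hUUdef (V * U), hUUdef U, hUUdef V, hco,
          mul_kronecker_mul, conjTranspose_mul]
        simp only [Matrix.mul_assoc]
      rw [h1]
      simp_rw [h2]
      exact pull (UU V) ((UU V)ᴴ) p q
    calc Y * UU V = UU V * Y * ((UU V)ᴴ * UU V) := by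
          conv_lhs => rw [hYV]
          simp only [Matrix.mul_assoc]
      _ = UU V * Y := by rw [hUUunit, Matrix.mul_one]
  -- trace identities
  have htrace_fU : ∀ U, (f U).trace = M.trace := by
    intro U
    rw [hfdef U, Matrix.trace_mul_comm, ← Matrix.mul_assoc, hUUunit, Matrix.one_mul]
  have htraceF_fU : ∀ U, (f U * swapMatrix d).trace = (M * swapMatrix d).trace := by
    intro U
    have hsw : (UU U)ᴴ * swapMatrix d = swapMatrix d * (UU U)ᴴ := by
      rw [hUUdef U, kron_conjTranspose]
      exact (swap_mul_kron _ _).symm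
    rw [hfdef U]
    calc (UU U * M * (UU U)ᴴ * swapMatrix d).trace
        = (UU U * M * (swapMatrix d * (UU U)ᴴ)).trace := by rw [Matrix.mul_assoc, hsw]
      _ = ((UU U * (M * swapMatrix d)) * (UU U)ᴴ).trace := by
          simp only [Matrix.mul_assoc]
      _ = ((UU U)ᴴ * (UU U * (M * swapMatrix d))).trace := Matrix.trace_mul_comm _ _
      _ = (M * swapMatrix d).trace := by
          rw [← Matrix.mul_assoc, hUUunit, Matrix.one_mul]
  have htr1 : Y.trace = M.trace := by
    rw [Matrix.trace]
    have : ∀ i : Fin d × Fin d, Y.diag i = ∫ U, f U i i ∂μ := fun i => rfl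
    simp_rw [this]
    rw [← integral_finset_sum _ (fun i _ => hint i i)]
    have : ∀ U : Matrix.unitaryGroup (Fin d) ℂ,
        ∑ i : Fin d × Fin d, f U i i = M.trace := by
      intro U
      rw [← htrace_fU U, Matrix.trace]
      rfl
    simp_rw [this]
    simp
  have htr2 : (Y * swapMatrix d).trace = (M * swapMatrix d).trace := by
    have key : ∀ p q : Fin d × Fin d,
        (Y * swapMatrix d) p q = ∫ U, (f U * swapMatrix d) p q ∂μ := by
      intro p q
      have := pull 1 (swapMatrix d) p q
      simp only [Matrix.one_mul] at this
      exact this.symm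
    rw [Matrix.trace]
    have : ∀ i : Fin d × Fin d, (Y * swapMatrix d).diag i
        = ∫ U, (f U * swapMatrix d) i i ∂μ := fun i => key i i
    simp_rw [this]
    have hintF : ∀ i : Fin d × Fin d, Integrable (fun U => (f U * swapMatrix d) i i) μ := by
      intro i
      have : (fun U => (f U * swapMatrix d) i i)
          = fun U => ∑ r : Fin d × Fin d, f U i r * swapMatrix d r i := by
        funext U
        rw [mul_apply]
      rw [this]
      exact integrable_finset_sum _ (fun r _ => (hint i r).mul_const _)
    rw [← integral_finset_sum _ (fun i _ => hintF i)]
    have : ∀ U : Matrix.unitaryGroup (Fin d) ℂ,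
        ∑ i : Fin d × Fin d, (f U * swapMatrix d) i i = (M * swapMatrix d).trace := by
      intro U
      rw [← htraceF_fU U, Matrix.trace]
      rfl
    simp_rw [this]
    simp
  -- apply the commutant classification
  obtain ⟨a, b, hab⟩ := commutant hd Y (fun V => hcomm V)
  -- compute a and b from the trace identities
  have hdc : ((d : ℂ)) ≠ 0 := Nat.cast_ne_zero.mpr (by omega)
  have hd2 : (d : ℂ) ^ 2 - 1 ≠ 0 := by
    intro hcon
    have h1 : ((d^2 : ℕ) : ℂ) = ((1:ℕ) : ℂ) := by
      push_cast
      linear_combination hcon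
    have h2n : d ^ 2 = 1 := Nat.cast_injective h1
    nlinarith [h2n, hd]
  have ta : a * (d:ℂ)^2 + b * (d:ℂ) = M.trace := by
    rw [← htr1, hab, Matrix.trace_add, Matrix.trace_smul, Matrix.trace_smul, trace_one',
      trace_swap]
    simp [smul_eq_mul]
  have tb : a * (d:ℂ) + b * (d:ℂ)^2 = (M * swapMatrix d).trace := by
    rw [← htr2, hab, Matrix.add_mul, Matrix.smul_mul, Matrix.smul_mul, Matrix.one_mul,
      swap_mul_swap, Matrix.trace_add, Matrix.trace_smul, Matrix.trace_smul, trace_swap,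
      trace_one']
    simp [smul_eq_mul]
  have ha' : a = ((d:ℂ) * M.trace - (M * swapMatrix d).trace) / ((d:ℂ) * ((d:ℂ)^2 - 1)) := by
    rw [eq_div_iff (mul_ne_zero hdc hd2)]
    linear_combination ((d:ℂ)) * ta - tb
  have hb' : b = ((d:ℂ) * (M * swapMatrix d).trace - M.trace) / ((d:ℂ) * ((d:ℂ)^2 - 1)) := by
    rw [eq_div_iff (mul_ne_zero hdc hd2)]
    linear_combination ((d:ℂ)) * tb - ta
  have ha : a = M.trace / ((d : ℂ) ^ 2 - 1)
      - (M * swapMatrix d).trace / ((d : ℂ) * ((d : ℂ) ^ 2 - 1)) := by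
    rw [ha']
    field_simp
  have hb : b = (M * swapMatrix d).trace / ((d : ℂ) ^ 2 - 1)
      - M.trace / ((d : ℂ) * ((d : ℂ) ^ 2 - 1)) := by
    rw [hb']
    field_simp
  have final : Y p q = ((M.trace / ((d : ℂ) ^ 2 - 1)
            - (M * swapMatrix d).trace / ((d : ℂ) * ((d : ℂ) ^ 2 - 1))) •
              (1 : Matrix (Fin d × Fin d) (Fin d × Fin d) ℂ)
          + ((M * swapMatrix d).trace / ((d : ℂ) ^ 2 - 1)
            - M.trace / ((d : ℂ) * ((d : ℂ) ^ 2 - 1))) • swapMatrix d) p q := by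
    rw [hab, ← ha, ← hb]
  exact final
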